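/- Let n ≥ 2 be an integer, ρ, ρ' ∈ (0,1), δ ∈ [0, n−1], C₁ > 0, and let ψ̃ : ℝ → ℂ be a continuous compactly supported function. Then there exists C > 0 such that the following holds for every h ∈ (0,1]. Let ψ₊, ψ₋ : S^{n−1} → [0,1] and ψ₀ : ℝ → [0,1] be measurable functions and ψ : S^{n−1} × S^{n−1} → ℂ a measurable function with |ψ| ≤ C₁ everywhere, such that σ(supp ψ₊) ≤ C₁ h^{ρ(n−1−δ)}, σ(supp ψ₋) ≤ C₁ h^{ρ'(n−1−δ)}, and supp ψ₀ ⊆ [1 − C₁h^ρ, 1 + C₁h^ρ]. Define the kernel K(w, y, w', y') = (2πh)^{−(n+1)/2} · (|y−y'|/2)^{2iw/h} · ψ(y,y') · ψ₋(y) · ψ₊(y') · ψ₀(w) · ∫_ℝ e^{i(w−w')θ/h} ψ̃(θ) dθ for (w,y,w',y') ∈ ℝ × S^{n−1} × ℝ × S^{n−1}. Then ∫∫∫∫ |K(w,y,w',y')|² dw dσ(y) dw' dσ(y') ≤ C h^{−n + ρ(n−δ) + ρ'(n−1−δ)}. -/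

import Mathlib

open MeasureTheory
open scoped ENNReal


open MeasureTheory Complex Filter Topology
open scoped ENNReal ComplexConjugate Real

section Helpers
noncomputable section

lemma norm_phase (s θ h : ℝ) : ‖Complex.exp (Complex.I * s * θ / h)‖ = 1 := by
  have : Complex.I * s * θ / h = ((s * θ / h : ℝ) : ℂ) * Complex.I := by
    push_cast; ring
  rw [this, Complex.norm_exp_ofReal_mul_I]

lemma norm_phase' (r s : ℝ) : ‖Complex.exp (Complex.I * (r:ℂ) * (s:ℂ))‖ = 1 := by
  have : Complex.I * (r:ℂ) * (s:ℂ) = ((r * s : ℝ) : ℂ) * Complex.I := by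
    push_cast; ring
  rw [this, Complex.norm_exp_ofReal_mul_I]

variable {ψt : ℝ → ℂ}

lemma eps_step (hψt : Continuous ψt) (h : ℝ) (hh : 0 < h) (ε : ℝ) (hε : 0 < ε) (B L : ℝ)
    (hB : ∀ θ, ‖ψt θ‖ ≤ B) (hLi : Integrable (fun θ => ‖ψt θ‖))
    (hL : (∫ θ, ‖ψt θ‖) ≤ L) :
    ∫ s : ℝ, ‖∫ θ : ℝ, Complex.exp (Complex.I * s * θ / h) * ψt θ‖ ^ 2
        * Real.exp (-ε * s ^ 2)
      ≤ 2 * π * h * B * L := by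
  have hψti : Integrable ψt := by
    rw [← integrable_norm_iff (hψt.aestronglyMeasurable)]; exact hLi
  set F : ℝ → ℂ := fun s => ∫ θ : ℝ, Complex.exp (Complex.I * s * θ / h) * ψt θ with hF
  set φ : ℝ → ℝ := fun s => Real.exp (-ε * s ^ 2) with hφ
  have hBnn : 0 ≤ B := le_trans (norm_nonneg _) (hB 0)
  have hLnn : 0 ≤ L := le_trans (integral_nonneg fun θ => norm_nonneg _) hL
  have hφpos : ∀ s, 0 < φ s := fun s => Real.exp_pos _
  have hφc : Continuous φ := by fun_prop
  have hgauss : Integrable φ := integrable_exp_neg_mul_sq hε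
  have hφC : ∀ s : ℝ, ((φ s : ℝ) : ℂ) = Complex.exp (-(ε:ℂ) * (s:ℂ) ^ 2) := by
    intro s
    rw [hφ, Complex.ofReal_exp]
    congr 1
    push_cast; ring
  have hec : Continuous fun p : ℝ × ℝ => Complex.exp (Complex.I * p.1 * p.2 / h) := by
    fun_prop
  have hFc : Continuous F := by
    rw [hF]
    apply continuous_of_dominated (bound := fun θ => ‖ψt θ‖)
    · intro s
      exact ((hec.comp (Continuous.prodMk_right s)).mul hψt).aestronglyMeasurable
    · intro s
      refine Eventually.of_forall fun θ => ?_
      beta_reduce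
      rw [norm_mul, norm_phase, one_mul]
    · exact hLi
    · exact Eventually.of_forall fun θ =>
        ((hec.comp (continuous_id.prodMk continuous_const)).mul continuous_const)
  have hFb : ∀ s, ‖F s‖ ≤ L := by
    intro s
    refine le_trans (norm_integral_le_integral_norm _) (le_trans (le_of_eq ?_) hL)
    refine integral_congr_ae (Eventually.of_forall fun θ => ?_)
    beta_reduce
    rw [norm_mul, norm_phase, one_mul]
  set Jf : ℝ → ℂ := fun s => (φ s : ℂ) * (F s * conj (F s)) with hJf
  have hJfc : Continuous Jf := by
    exact (Complex.continuous_ofReal.comp hφc).mul (hFc.mul hFc.star)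
  have hJfi : Integrable Jf := by
    refine ((hgauss.const_mul (L * L)).mono' hJfc.aestronglyMeasurable ?_)
    refine Eventually.of_forall fun s => ?_
    rw [hJf]
    simp only [norm_mul, Complex.norm_real, RCLike.norm_conj,
      Real.norm_of_nonneg (hφpos s).le]
    calc φ s * (‖F s‖ * ‖F s‖) ≤ φ s * (L * L) := by
          apply mul_le_mul_of_nonneg_left _ (hφpos s).le
          exact mul_le_mul (hFb s) (hFb s) (norm_nonneg _) hLnn
      _ = L * L * φ s := by ring
  -- the real integrand is the real part of Jf
  have hre : ∀ s : ℝ, ‖F s‖ ^ 2 * φ s = (Jf s).re := by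
    intro s
    have h1 : F s * conj (F s) = ((‖F s‖ ^ 2 : ℝ) : ℂ) := by
      rw [Complex.mul_conj]
      norm_cast
      rw [Complex.sq_norm]
    rw [hJf]
    simp only [h1, ← Complex.ofReal_mul, Complex.ofReal_re]
    ring
  -- H θ
  set H : ℝ → ℂ := fun θ =>
    ∫ s : ℝ, Complex.exp (Complex.I * s * θ / h) * ((φ s : ℂ) * conj (F s)) with hH
  -- Fubini 1
  have hint1 : Integrable (Function.uncurry fun (s θ : ℝ) =>
      ψt θ * (Complex.exp (Complex.I * s * θ / h) * ((φ s : ℂ) * conj (F s))))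
      (volume.prod volume) := by
    have hdom : Integrable (fun p : ℝ × ℝ => (L * φ p.1) * ‖ψt p.2‖)
        (volume.prod volume) := (hgauss.const_mul L).mul_prod hLi
    refine hdom.mono' ?_ ?_
    · apply Continuous.aestronglyMeasurable
      apply (hψt.comp continuous_snd).mul
      exact hec.mul (((Complex.continuous_ofReal.comp (hφc.comp continuous_fst))).mul
        ((hFc.comp continuous_fst).star))
    · refine Eventually.of_forall fun p => ?_
      simp only [Function.uncurry, norm_mul, norm_phase, one_mul, Complex.norm_real,
        RCLike.norm_conj, Real.norm_of_nonneg (hφpos p.1).le]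
      nlinarith [hFb p.1, (hφpos p.1).le, norm_nonneg (ψt p.2), norm_nonneg (F p.1),
        mul_le_mul_of_nonneg_left (hFb p.1) (hφpos p.1).le]
  have hsw1 : ∫ s, Jf s = ∫ θ, ψt θ * H θ := by
    have h1 : ∀ s : ℝ, Jf s = ∫ θ : ℝ,
        ψt θ * (Complex.exp (Complex.I * s * θ / h) * ((φ s : ℂ) * conj (F s))) := by
      intro s
      have h2 : Jf s = F s * ((φ s : ℂ) * conj (F s)) := by rw [hJf]; ring
      rw [h2, hF]
      simp only []
      rw [← integral_mul_const]
      refine integral_congr_ae (Eventually.of_forall fun θ => ?_)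
      beta_reduce
      ring
    rw [integral_congr_ae (Eventually.of_forall h1), integral_integral_swap hint1]
    exact integral_congr_ae (Eventually.of_forall fun θ => integral_const_mul _ _)
  -- bound on ‖H θ‖
  have hHb : ∀ θ : ℝ, ‖H θ‖ ≤ 2 * π * h * B := by
    intro θ
    set c : ℝ → ℝ := fun θ' => (θ - θ') / h with hc
    set k : ℝ := 1 / (4 * ε * h ^ 2) with hk
    have hkpos : 0 < k := by rw [hk]; positivity
    -- rewrite the integrand of H θ as an integral over θ'
    have h2 : ∀ s : ℝ, Complex.exp (Complex.I * s * θ / h) * ((φ s : ℂ) * conj (F s))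
        = ∫ θ' : ℝ, conj (ψt θ') *
            (Complex.exp (Complex.I * ((c θ' : ℝ) : ℂ) * (s : ℂ)) *
              Complex.exp (-(ε:ℂ) * (s:ℂ) ^ 2)) := by
      intro s
      have hconjF : conj (F s)
          = ∫ θ' : ℝ, Complex.exp (-(Complex.I * s * θ' / h)) * conj (ψt θ') := by
        rw [hF]
        simp only []
        rw [← integral_conj]
        refine integral_congr_ae (Eventually.of_forall fun θ' => ?_)
        beta_reduce
        rw [map_mul, ← Complex.exp_conj]
        congr 1
        simp only [map_div₀, map_mul, Complex.conj_I, Complex.conj_ofReal]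
        ring
      have hne : (h:ℂ) ≠ 0 := by exact_mod_cast hh.ne'
      calc Complex.exp (Complex.I * s * θ / h) * ((φ s : ℂ) * conj (F s))
          = (Complex.exp (Complex.I * s * θ / h) * (φ s : ℂ)) * conj (F s) := by ring
        _ = ∫ θ' : ℝ, (Complex.exp (Complex.I * s * θ / h) * (φ s : ℂ)) *
              (Complex.exp (-(Complex.I * s * θ' / h)) * conj (ψt θ')) := by
            rw [hconjF, ← integral_const_mul]
        _ = _ := by
            refine integral_congr_ae (Eventually.of_forall fun θ' => ?_)
            beta_reduce
            rw [hφC]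
            calc (Complex.exp (Complex.I * s * θ / h) * Complex.exp (-(ε:ℂ) * (s:ℂ)^2)) *
                  (Complex.exp (-(Complex.I * s * θ' / h)) * conj (ψt θ'))
                = conj (ψt θ') * (Complex.exp (Complex.I * s * θ / h) *
                    Complex.exp (-(ε:ℂ) * (s:ℂ)^2) *
                    Complex.exp (-(Complex.I * s * θ' / h))) := by ring
              _ = conj (ψt θ') * Complex.exp
                    (Complex.I * s * θ / h + -(ε:ℂ) * (s:ℂ)^2 + -(Complex.I * s * θ' / h)) := by
                  rw [← Complex.exp_add, ← Complex.exp_add]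
              _ = conj (ψt θ') * Complex.exp
                    (Complex.I * ((c θ' : ℝ) : ℂ) * (s:ℂ) + -(ε:ℂ) * (s:ℂ)^2) := by
                  congr 1
                  congr 1
                  rw [hc]
                  push_cast
                  field_simp
                  ring
              _ = conj (ψt θ') * (Complex.exp (Complex.I * ((c θ' : ℝ) : ℂ) * (s:ℂ)) *
                    Complex.exp (-(ε:ℂ) * (s:ℂ)^2)) := by rw [Complex.exp_add]
    have hint2 : Integrable (Function.uncurry fun (s θ' : ℝ) => conj (ψt θ') *
        (Complex.exp (Complex.I * ((c θ' : ℝ) : ℂ) * (s : ℂ)) *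
          Complex.exp (-(ε:ℂ) * (s:ℂ) ^ 2))) (volume.prod volume) := by
      have hdom : Integrable (fun p : ℝ × ℝ => φ p.1 * ‖ψt p.2‖)
          (volume.prod volume) := hgauss.mul_prod hLi
      refine hdom.mono' ?_ ?_
      · apply Continuous.aestronglyMeasurable
        apply ((hψt.comp continuous_snd).star).mul
        apply Continuous.mul
        · apply Complex.continuous_exp.comp
          have : Continuous fun p : ℝ × ℝ => c p.2 := by rw [hc]; fun_prop
          fun_prop
        · apply Complex.continuous_exp.comp
          fun_prop
      · refine Eventually.of_forall fun p => ?_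
        simp only [Function.uncurry, norm_mul, RCLike.norm_conj, norm_phase']
        rw [← hφC p.1, Complex.norm_real, Real.norm_of_nonneg (hφpos p.1).le]
        simp [mul_comm]
      -- goal: ‖ψt p.2‖ * φ p.1 ≤ φ p.1 * ‖ψt p.2‖ handled by mul_comm rw above
    have hswap2 : H θ = ∫ θ' : ℝ, ∫ s : ℝ, conj (ψt θ') *
        (Complex.exp (Complex.I * ((c θ' : ℝ) : ℂ) * (s : ℂ)) *
          Complex.exp (-(ε:ℂ) * (s:ℂ) ^ 2)) := by
      rw [hH]
      simp only []
      rw [integral_congr_ae (Eventually.of_forall h2)]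
      exact integral_integral_swap hint2
    have hgaussval : ∀ θ' : ℝ, (∫ s : ℝ, conj (ψt θ') *
        (Complex.exp (Complex.I * ((c θ' : ℝ) : ℂ) * (s : ℂ)) *
          Complex.exp (-(ε:ℂ) * (s:ℂ) ^ 2)))
        = conj (ψt θ') * (((π : ℂ) / (ε:ℂ)) ^ (1/2 : ℂ) *
            Complex.exp (-((c θ' : ℝ) : ℂ) ^ 2 / (4 * (ε:ℂ)))) := by
      intro θ'
      rw [integral_const_mul]
      congr 1
      exact fourierIntegral_gaussian (by simpa using hε) _
    have hnormgauss : ∀ θ' : ℝ, ‖conj (ψt θ') * (((π : ℂ) / (ε:ℂ)) ^ (1/2 : ℂ) *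
        Complex.exp (-((c θ' : ℝ) : ℂ) ^ 2 / (4 * (ε:ℂ))))‖
        = ‖ψt θ'‖ * (Real.sqrt (π / ε) * Real.exp (-k * (θ - θ') ^ 2)) := by
      intro θ'
      rw [norm_mul, norm_mul, RCLike.norm_conj]
      congr 2
      · have h3 : ((π:ℂ) / (ε:ℂ)) = (((π / ε : ℝ)) : ℂ) := by push_cast; ring
        rw [h3,
          Complex.norm_cpow_eq_rpow_re_of_pos (div_pos Real.pi_pos hε)]
        rw [Real.sqrt_eq_rpow]
        norm_num
      · have h4 : -((c θ' : ℝ) : ℂ) ^ 2 / (4 * (ε:ℂ)) = ((-k * (θ - θ') ^ 2 : ℝ) : ℂ) := by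
          rw [hc, hk]
          push_cast
          field_simp
        rw [h4, Complex.norm_exp]
        rw [Complex.ofReal_re]
    have htransint : Integrable (fun θ' : ℝ => Real.exp (-k * (θ - θ') ^ 2)) := by
      have h5 : (fun θ' : ℝ => Real.exp (-k * (θ - θ') ^ 2))
          = (fun x : ℝ => Real.exp (-k * x ^ 2)) ∘ (fun θ' => θ - θ') := rfl
      rw [h5]
      apply Integrable.comp_sub_left (integrable_exp_neg_mul_sq hkpos)
    have htransval : (∫ θ' : ℝ, Real.exp (-k * (θ - θ') ^ 2))
        = Real.sqrt (π / k) := by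
      rw [show (fun θ' : ℝ => Real.exp (-k * (θ - θ') ^ 2))
          = fun θ' => (fun x : ℝ => Real.exp (-k * x ^ 2)) (θ - θ') from rfl]
      rw [integral_sub_left_eq_self (fun x : ℝ => Real.exp (-k * x ^ 2)) volume θ]
      exact integral_gaussian k
    calc ‖H θ‖ = ‖∫ θ' : ℝ, conj (ψt θ') * (((π : ℂ) / (ε:ℂ)) ^ (1/2 : ℂ) *
            Complex.exp (-((c θ' : ℝ) : ℂ) ^ 2 / (4 * (ε:ℂ))))‖ := by
          rw [hswap2, integral_congr_ae (Eventually.of_forall hgaussval)]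
      _ ≤ ∫ θ' : ℝ, ‖conj (ψt θ') * (((π : ℂ) / (ε:ℂ)) ^ (1/2 : ℂ) *
            Complex.exp (-((c θ' : ℝ) : ℂ) ^ 2 / (4 * (ε:ℂ))))‖ :=
          norm_integral_le_integral_norm _
      _ = ∫ θ' : ℝ, ‖ψt θ'‖ * (Real.sqrt (π / ε) * Real.exp (-k * (θ - θ') ^ 2)) :=
          integral_congr_ae (Eventually.of_forall hnormgauss)
      _ ≤ ∫ θ' : ℝ, B * (Real.sqrt (π / ε) * Real.exp (-k * (θ - θ') ^ 2)) := by
          apply integral_mono_of_nonneg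
          · exact Eventually.of_forall fun θ' => by positivity
          · exact (htransint.const_mul _).const_mul _
          · refine Eventually.of_forall fun θ' => ?_
            apply mul_le_mul_of_nonneg_right (hB θ')
            positivity
      _ = B * (Real.sqrt (π / ε) * Real.sqrt (π / k)) := by
          rw [integral_const_mul, integral_const_mul, htransval]
      _ = 2 * π * h * B := by
          rw [← Real.sqrt_mul (by positivity)]
          rw [show π / ε * (π / k) = (2 * π * h) ^ 2 by
            rw [hk]; field_simp; ring]
          rw [Real.sqrt_sq (by positivity)]
          ring
  -- put everything together
  have hfinal : (∫ s, Jf s).re ≤ 2 * π * h * B * L := by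
    refine le_trans (Complex.re_le_norm _) ?_
    rw [hsw1]
    refine le_trans (norm_integral_le_integral_norm _) ?_
    calc ∫ θ, ‖ψt θ * H θ‖ = ∫ θ, ‖ψt θ‖ * ‖H θ‖ :=
          integral_congr_ae (Eventually.of_forall fun θ => norm_mul _ _)
      _ ≤ ∫ θ, ‖ψt θ‖ * (2 * π * h * B) := by
          apply integral_mono_of_nonneg
          · exact Eventually.of_forall fun θ => by positivity
          · exact hLi.mul_const _
          · exact Eventually.of_forall fun θ =>
              mul_le_mul_of_nonneg_left (hHb θ) (norm_nonneg _)
      _ = (∫ θ, ‖ψt θ‖) * (2 * π * h * B) := integral_mul_const _ _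
      _ ≤ L * (2 * π * h * B) := by
          apply mul_le_mul_of_nonneg_right hL
          positivity
      _ = 2 * π * h * B * L := by ring
  calc ∫ s : ℝ, ‖F s‖ ^ 2 * φ s = ∫ s : ℝ, (Jf s).re :=
        integral_congr_ae (Eventually.of_forall hre)
    _ = (∫ s, Jf s).re := by
        rw [← RCLike.re_eq_complex_re]
        exact integral_re hJfi
    _ ≤ 2 * π * h * B * L := hfinal

end

noncomputable section
variable {ψt : ℝ → ℂ}

lemma key_lintegral (hψt : Continuous ψt) (h : ℝ) (hh : 0 < h) (B L : ℝ)
    (hB : ∀ θ, ‖ψt θ‖ ≤ B) (hLi : Integrable (fun θ => ‖ψt θ‖))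
    (hL : (∫ θ, ‖ψt θ‖) ≤ L) :
    ∫⁻ s : ℝ, (‖∫ θ : ℝ, Complex.exp (Complex.I * s * θ / h) * ψt θ‖₊ : ℝ≥0∞) ^ 2
      ≤ ENNReal.ofReal (2 * π * h * B * L) := by
  set F : ℝ → ℂ := fun s => ∫ θ : ℝ, Complex.exp (Complex.I * s * θ / h) * ψt θ with hF
  have hLnn : 0 ≤ L := le_trans (integral_nonneg fun θ => norm_nonneg _) hL
  have hec : Continuous fun p : ℝ × ℝ => Complex.exp (Complex.I * p.1 * p.2 / h) := by
    fun_prop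
  have hFc : Continuous F := by
    rw [hF]
    apply continuous_of_dominated (bound := fun θ => ‖ψt θ‖)
    · intro s
      exact ((hec.comp (Continuous.prodMk_right s)).mul hψt).aestronglyMeasurable
    · intro s
      refine Eventually.of_forall fun θ => ?_
      beta_reduce
      rw [norm_mul, norm_phase, one_mul]
    · exact hLi
    · exact Eventually.of_forall fun θ =>
        ((hec.comp (continuous_id.prodMk continuous_const)).mul continuous_const)
  have hFb : ∀ s, ‖F s‖ ≤ L := by
    intro s
    refine le_trans (norm_integral_le_integral_norm _) (le_trans (le_of_eq ?_) hL)
    refine integral_congr_ae (Eventually.of_forall fun θ => ?_)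
    beta_reduce
    rw [norm_mul, norm_phase, one_mul]
  -- the approximating sequence
  set f : ℕ → ℝ → ℝ≥0∞ := fun k s =>
    ENNReal.ofReal (‖F s‖ ^ 2 * Real.exp (-(1 / (k + 1)) * s ^ 2)) with hf
  have hfm : ∀ k, Measurable (f k) := by
    intro k
    apply ENNReal.measurable_ofReal.comp
    exact ((hFc.norm.pow 2).mul (by fun_prop)).measurable
  have hlim : ∀ s : ℝ, Tendsto (fun k : ℕ => f k s) atTop
      (𝓝 (ENNReal.ofReal (‖F s‖ ^ 2))) := by
    intro s
    apply (ENNReal.continuous_ofReal.continuousAt).tendsto.comp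
    have h1 : Tendsto (fun k : ℕ => (1 : ℝ) / (k + 1)) atTop (𝓝 0) :=
      tendsto_one_div_add_atTop_nhds_zero_nat
    have h2 : Tendsto (fun k : ℕ => -(1 / ((k : ℝ) + 1)) * s ^ 2) atTop (𝓝 0) := by
      simpa using (h1.neg.mul_const (s ^ 2))
    have h3 : Tendsto (fun k : ℕ => Real.exp (-(1 / ((k : ℝ) + 1)) * s ^ 2)) atTop
        (𝓝 1) := by
      simpa [Function.comp_def] using (Real.continuous_exp.continuousAt.tendsto.comp h2)
    simpa using tendsto_const_nhds.mul h3
  have heq : ∀ s : ℝ, (‖F s‖₊ : ℝ≥0∞) ^ 2 = ENNReal.ofReal (‖F s‖ ^ 2) := by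
    intro s
    rw [ENNReal.ofReal_pow (norm_nonneg _), ofReal_norm_eq_enorm, enorm_eq_nnnorm]
  have hbound : ∀ k : ℕ, ∫⁻ s, f k s ≤ ENNReal.ofReal (2 * π * h * B * L) := by
    intro k
    have hεpos : (0:ℝ) < 1 / (k + 1) := by positivity
    have hint : Integrable (fun s : ℝ => ‖F s‖ ^ 2 * Real.exp (-(1 / ((k:ℝ) + 1)) * s ^ 2)) := by
      refine ((integrable_exp_neg_mul_sq hεpos).const_mul (L * L)).mono'
        (((hFc.norm.pow 2).mul (by fun_prop)).aestronglyMeasurable) ?_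
      refine Eventually.of_forall fun s => ?_
      beta_reduce
      rw [Real.norm_of_nonneg (by positivity)]
      have := hFb s
      have hFnn := norm_nonneg (F s)
      have hexp := (Real.exp_pos (-(1 / ((k:ℝ) + 1)) * s ^ 2)).le
      nlinarith [mul_le_mul_of_nonneg_right (mul_le_mul this this hFnn hLnn) hexp]
    rw [hf]
    rw [← ofReal_integral_eq_lintegral_ofReal hint
      (Eventually.of_forall fun s => by positivity)]
    exact ENNReal.ofReal_le_ofReal
      (eps_step hψt h hh _ hεpos B L hB hLi hL)
  calc ∫⁻ s : ℝ, (‖F s‖₊ : ℝ≥0∞) ^ 2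
      = ∫⁻ s : ℝ, liminf (fun k : ℕ => f k s) atTop := by
        refine lintegral_congr fun s => ?_
        rw [heq s, (hlim s).liminf_eq]
    _ ≤ liminf (fun k : ℕ => ∫⁻ s, f k s) atTop := lintegral_liminf_le hfm
    _ ≤ ENNReal.ofReal (2 * π * h * B * L) := by
        exact Filter.liminf_le_of_frequently_le
          (Filter.Eventually.frequently (Eventually.of_forall hbound))
          ⟨0, Eventually.of_forall fun _ => by simp⟩

end

noncomputable section

lemma norm_cpow_le_one (r t h : ℝ) (hr : 0 ≤ r) :
    ‖(r : ℂ) ^ (2 * Complex.I * (t : ℂ) / (h : ℂ))‖ ≤ 1 := by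
  rcases eq_or_lt_of_le hr with h0 | h0
  · rw [← h0]
    simp only [Complex.ofReal_zero]
    by_cases hz : (2 * Complex.I * (t : ℂ) / (h : ℂ)) = 0
    · rw [hz, Complex.cpow_zero]; simp
    · rw [Complex.zero_cpow hz]; simp
  · rw [Complex.norm_cpow_eq_rpow_re_of_pos h0]
    have hre : (2 * Complex.I * (t : ℂ) / (h : ℂ)).re = 0 := by
      have : 2 * Complex.I * (t : ℂ) / (h : ℂ) = ((2 * t / h : ℝ) : ℂ) * Complex.I := by
        push_cast; ring
      rw [this]
      simp [Complex.mul_re]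
    rw [hre, Real.rpow_zero]

lemma F_cont {ψt : ℝ → ℂ} (hψt : Continuous ψt)
    (hLi : Integrable (fun θ => ‖ψt θ‖)) (h : ℝ) :
    Continuous fun s : ℝ => ∫ θ : ℝ, Complex.exp (Complex.I * s * θ / h) * ψt θ := by
  have hec : Continuous fun p : ℝ × ℝ => Complex.exp (Complex.I * p.1 * p.2 / h) := by
    fun_prop
  apply continuous_of_dominated (bound := fun θ => ‖ψt θ‖)
  · intro s
    exact ((hec.comp (Continuous.prodMk_right s)).mul hψt).aestronglyMeasurable
  · intro s
    refine Eventually.of_forall fun θ => ?_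
    beta_reduce
    rw [norm_mul, norm_phase, one_mul]
  · exact hLi
  · exact Eventually.of_forall fun θ =>
      ((hec.comp (continuous_id.prodMk continuous_const)).mul continuous_const)

lemma ind_ne_top {α : Type*} (S : Set α) (x : α) :
    S.indicator (1 : α → ℝ≥0∞) x ≠ ⊤ := by
  by_cases hx : x ∈ S <;> simp [hx]

end


end Helpers

/-- The surface measure on the unit sphere `S^{n-1} ⊆ ℝⁿ`: the `(n-1)`-dimensional
Hausdorff measure of `EuclideanSpace ℝ (Fin n)`, pulled back to the sphere. -/
noncomputable def sphereSurfaceMeasure (n : ℕ) :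
    Measure (Metric.sphere (0 : EuclideanSpace ℝ (Fin n)) 1) :=
  Measure.comap Subtype.val (μH[(n : ℝ) - 1])

/-- **The Hilbert–Schmidt kernel estimate (Lemma `l:hs-inside`).**
Let `n ≥ 2`, `ρ, ρ' ∈ (0,1)`, `δ ∈ [0, n-1]`, `C₁ > 0`, and `ψ̃ : ℝ → ℂ` continuous with
compact support. Then there is `C > 0` such that for all `h ∈ (0,1]` and all measurable
`ψ₊, ψ₋ : S^{n-1} → [0,1]`, `ψ₀ : ℝ → [0,1]`, `ψ : S^{n-1} × S^{n-1} → ℂ` with `|ψ| ≤ C₁`,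
`σ(supp ψ₊) ≤ C₁ h^{ρ(n-1-δ)}`, `σ(supp ψ₋) ≤ C₁ h^{ρ'(n-1-δ)}`, and
`supp ψ₀ ⊆ [1-C₁h^ρ, 1+C₁h^ρ]`, the squared `L²`-norm of the kernel
`K(w,y,w',y') = (2πh)^{-(n+1)/2} (|y-y'|/2)^{2iw/h} ψ(y,y') ψ₋(y) ψ₊(y') ψ₀(w)
∫ e^{i(w-w')θ/h} ψ̃(θ) dθ` is at most `C h^{-n+ρ(n-δ)+ρ'(n-1-δ)}`. -/
theorem stmt2 (n : ℕ) (hn : 2 ≤ n) (ρ ρ' δ : ℝ)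
    (hρ : ρ ∈ Set.Ioo (0:ℝ) 1) (hρ' : ρ' ∈ Set.Ioo (0:ℝ) 1)
    (hδ : δ ∈ Set.Icc (0:ℝ) ((n:ℝ) - 1))
    (C₁ : ℝ) (hC₁ : 0 < C₁)
    (ψt : ℝ → ℂ) (hψt : Continuous ψt) (hψtsupp : HasCompactSupport ψt) :
    ∃ C > 0, ∀ h ∈ Set.Ioc (0:ℝ) 1,
      ∀ (ψp ψm : Metric.sphere (0 : EuclideanSpace ℝ (Fin n)) 1 → ℝ)
        (ψ₀ : ℝ → ℝ)
        (ψ : Metric.sphere (0 : EuclideanSpace ℝ (Fin n)) 1 →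
             Metric.sphere (0 : EuclideanSpace ℝ (Fin n)) 1 → ℂ),
        Measurable ψp → Measurable ψm → Measurable ψ₀ →
        Measurable (Function.uncurry ψ) →
        (∀ y, ψp y ∈ Set.Icc (0:ℝ) 1) → (∀ y, ψm y ∈ Set.Icc (0:ℝ) 1) →
        (∀ w, ψ₀ w ∈ Set.Icc (0:ℝ) 1) →
        (∀ y y', ‖ψ y y'‖ ≤ C₁) →
        sphereSurfaceMeasure n (Function.support ψp)
          ≤ ENNReal.ofReal (C₁ * h ^ (ρ * ((n:ℝ) - 1 - δ))) →
        sphereSurfaceMeasure n (Function.support ψm)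
          ≤ ENNReal.ofReal (C₁ * h ^ (ρ' * ((n:ℝ) - 1 - δ))) →
        Function.support ψ₀ ⊆ Set.Icc (1 - C₁ * h ^ ρ) (1 + C₁ * h ^ ρ) →
        (∫⁻ w : ℝ, ∫⁻ y, ∫⁻ w' : ℝ, ∫⁻ y',
            (‖(((2 * Real.pi * h) ^ (-((n:ℝ) + 1) / 2) : ℝ) : ℂ) *
                (((‖(y : EuclideanSpace ℝ (Fin n)) - (y' : EuclideanSpace ℝ (Fin n))‖
                    / 2 : ℝ) : ℂ) ^ (2 * Complex.I * (w : ℂ) / (h : ℂ))) *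
                ψ y y' * ((ψm y : ℝ) : ℂ) * ((ψp y' : ℝ) : ℂ) * ((ψ₀ w : ℝ) : ℂ) *
                (∫ θ : ℝ, Complex.exp (Complex.I * ((w : ℂ) - (w' : ℂ)) * (θ : ℂ)
                    / (h : ℂ)) * ψt θ)‖₊ : ℝ≥0∞) ^ 2
              ∂(sphereSurfaceMeasure n) ∂(volume : Measure ℝ)
            ∂(sphereSurfaceMeasure n) ∂(volume : Measure ℝ))
          ≤ ENNReal.ofReal
              (C * h ^ (-(n:ℝ) + ρ * ((n:ℝ) - δ) + ρ' * ((n:ℝ) - 1 - δ))) := by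
    classical
  obtain ⟨x₀, hx₀⟩ := hψt.norm.exists_forall_ge_of_hasCompactSupport hψtsupp.norm
  set B : ℝ := ‖ψt x₀‖ + 1 with hBdef
  have hBpos : 0 < B := by positivity
  have hB : ∀ θ, ‖ψt θ‖ ≤ B := fun θ => le_trans (hx₀ θ) (by rw [hBdef]; linarith)
  have hLi : Integrable (fun θ => ‖ψt θ‖) :=
    hψt.norm.integrable_of_hasCompactSupport hψtsupp.norm
  set L : ℝ := (∫ θ : ℝ, ‖ψt θ‖) + 1 with hLdef
  have hintnn : 0 ≤ ∫ θ : ℝ, ‖ψt θ‖ := integral_nonneg fun θ => norm_nonneg _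
  have hLpos : 0 < L := by rw [hLdef]; linarith
  have hL : (∫ θ : ℝ, ‖ψt θ‖) ≤ L := by rw [hLdef]; linarith
  refine ⟨(2*π)^(-((n:ℝ)+1)) * C₁^2 * C₁ * (2*π*B*L) * C₁ * (2*C₁), by positivity, ?_⟩
  rintro h ⟨hh, hh1⟩
  intro ψp ψm ψ₀ ψ hψp hψm hψ₀ hψmeas hψp01 hψm01 hψ₀01 hψC hσp hσm hsupp₀
  set σ := sphereSurfaceMeasure n with hσdef
  set P₀ : ℝ := (2 * Real.pi * h) ^ (-((n:ℝ) + 1) / 2) with hP₀def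
  have h2πh : (0:ℝ) < 2 * Real.pi * h := by positivity
  have hP₀pos : 0 < P₀ := Real.rpow_pos_of_pos h2πh _
  set G : ℝ → ℝ≥0∞ := fun s =>
    (‖∫ θ : ℝ, Complex.exp (Complex.I * s * θ / h) * ψt θ‖₊ : ℝ≥0∞) ^ 2 with hGdef
  have hGm : Measurable G := by
    apply Measurable.pow_const
    exact ((F_cont hψt hLi h).nnnorm.measurable).coe_nnreal_ennreal
  have hGfin : ∀ s, G s ≠ ⊤ := fun s => by
    rw [hGdef]; exact ENNReal.pow_ne_top ENNReal.coe_ne_top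
  set E : ℝ≥0∞ := ∫⁻ s : ℝ, G s with hEdef
  have hEle : E ≤ ENNReal.ofReal (2*π*h*B*L) := key_lintegral hψt h hh B L hB hLi hL
  have hEfin : E ≠ ⊤ := ne_top_of_le_ne_top ENNReal.ofReal_ne_top hEle
  set A : ℝ≥0∞ := (ENNReal.ofReal (P₀ * C₁)) ^ 2 with hAdef
  have hAfin : A ≠ ⊤ := ENNReal.pow_ne_top ENNReal.ofReal_ne_top
  set Sp := Function.support ψp with hSpdef
  set Sm := Function.support ψm with hSmdef
  have hSpm : MeasurableSet Sp := by
    rw [hSpdef, Function.support_eq_preimage]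
    exact hψp (measurableSet_singleton 0).compl
  have hSmm : MeasurableSet Sm := by
    rw [hSmdef, Function.support_eq_preimage]
    exact hψm (measurableSet_singleton 0).compl
  have hSpfin : σ Sp ≠ ⊤ := ne_top_of_le_ne_top ENNReal.ofReal_ne_top hσp
  have hSmfin : σ Sm ≠ ⊤ := ne_top_of_le_ne_top ENNReal.ofReal_ne_top hσm
  set Ic : Set ℝ := Set.Icc (1 - C₁ * h ^ ρ) (1 + C₁ * h ^ ρ) with hIcdef
  -- pointwise bound
  have main : (∫⁻ w : ℝ, ∫⁻ y, ∫⁻ w' : ℝ, ∫⁻ y',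
      (‖(((2 * Real.pi * h) ^ (-((n:ℝ) + 1) / 2) : ℝ) : ℂ) *
          (((‖(y : EuclideanSpace ℝ (Fin n)) - (y' : EuclideanSpace ℝ (Fin n))‖
              / 2 : ℝ) : ℂ) ^ (2 * Complex.I * (w : ℂ) / (h : ℂ))) *
          ψ y y' * ((ψm y : ℝ) : ℂ) * ((ψp y' : ℝ) : ℂ) * ((ψ₀ w : ℝ) : ℂ) *
          (∫ θ : ℝ, Complex.exp (Complex.I * ((w : ℂ) - (w' : ℂ)) * (θ : ℂ)
              / (h : ℂ)) * ψt θ)‖₊ : ℝ≥0∞) ^ 2 ∂σ ∂(volume : Measure ℝ) ∂σ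
        ∂(volume : Measure ℝ))
      ≤ ∫⁻ w : ℝ, ∫⁻ y, ∫⁻ w' : ℝ, ∫⁻ y',
          A * Ic.indicator 1 w * Sm.indicator 1 y * G (w - w') * Sp.indicator 1 y'
          ∂σ ∂(volume : Measure ℝ) ∂σ ∂(volume : Measure ℝ) := by
    refine lintegral_mono fun w => lintegral_mono fun y => lintegral_mono fun w' =>
      lintegral_mono fun y' => ?_
    by_cases hw : ψ₀ w = 0
    · simp [hw]
    by_cases hy : ψm y = 0
    · simp [hy]
    by_cases hy' : ψp y' = 0
    · simp [hy']
    rw [Set.indicator_of_mem (hsupp₀ hw), Set.indicator_of_mem (Function.mem_support.mpr hy),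
      Set.indicator_of_mem (Function.mem_support.mpr hy')]
    simp only [Pi.one_apply, mul_one, one_mul]
    have hθint : (∫ θ : ℝ, Complex.exp (Complex.I * ((w : ℂ) - (w' : ℂ)) * (θ : ℂ)
        / (h : ℂ)) * ψt θ)
        = ∫ θ : ℝ, Complex.exp (Complex.I * ((w - w' : ℝ) : ℂ) * (θ : ℂ) / (h : ℂ)) * ψt θ := by
      push_cast
      ring_nf
    have hKnorm : ‖(((2 * Real.pi * h) ^ (-((n:ℝ) + 1) / 2) : ℝ) : ℂ) *
        (((‖(y : EuclideanSpace ℝ (Fin n)) - (y' : EuclideanSpace ℝ (Fin n))‖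
            / 2 : ℝ) : ℂ) ^ (2 * Complex.I * (w : ℂ) / (h : ℂ))) *
        ψ y y' * ((ψm y : ℝ) : ℂ) * ((ψp y' : ℝ) : ℂ) * ((ψ₀ w : ℝ) : ℂ) *
        (∫ θ : ℝ, Complex.exp (Complex.I * ((w : ℂ) - (w' : ℂ)) * (θ : ℂ)
            / (h : ℂ)) * ψt θ)‖
        ≤ (P₀ * C₁) * ‖∫ θ : ℝ, Complex.exp (Complex.I * ((w - w' : ℝ) : ℂ) * (θ : ℂ)
            / (h : ℂ)) * ψt θ‖ := by
      rw [hθint]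
      simp only [norm_mul]
      have hc1 : ‖(((2 * Real.pi * h) ^ (-((n:ℝ) + 1) / 2) : ℝ) : ℂ)‖ = P₀ := by
        rw [Complex.norm_real, Real.norm_of_nonneg hP₀pos.le, hP₀def]
      rw [hc1]
      calc P₀ * ‖(((‖(y : EuclideanSpace ℝ (Fin n)) - (y' : EuclideanSpace ℝ (Fin n))‖
              / 2 : ℝ) : ℂ) ^ (2 * Complex.I * (w : ℂ) / (h : ℂ)))‖ * ‖ψ y y'‖ *
            ‖((ψm y : ℝ) : ℂ)‖ * ‖((ψp y' : ℝ) : ℂ)‖ * ‖((ψ₀ w : ℝ) : ℂ)‖ *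
            ‖∫ θ : ℝ, Complex.exp (Complex.I * ((w - w' : ℝ) : ℂ) * (θ : ℂ)
              / (h : ℂ)) * ψt θ‖
          ≤ P₀ * 1 * C₁ * 1 * 1 * 1 *
            ‖∫ θ : ℝ, Complex.exp (Complex.I * ((w - w' : ℝ) : ℂ) * (θ : ℂ)
              / (h : ℂ)) * ψt θ‖ := by
            gcongr
            · exact norm_cpow_le_one _ _ _ (by positivity)
            · exact hψC y y'
            · rw [Complex.norm_real, Real.norm_of_nonneg (hψm01 y).1]
              exact (hψm01 y).2
            · rw [Complex.norm_real, Real.norm_of_nonneg (hψp01 y').1]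
              exact (hψp01 y').2
            · rw [Complex.norm_real, Real.norm_of_nonneg (hψ₀01 w).1]
              exact (hψ₀01 w).2
        _ = (P₀ * C₁) * ‖∫ θ : ℝ, Complex.exp (Complex.I * ((w - w' : ℝ) : ℂ) * (θ : ℂ)
              / (h : ℂ)) * ψt θ‖ := by ring
    calc (‖(((2 * Real.pi * h) ^ (-((n:ℝ) + 1) / 2) : ℝ) : ℂ) *
        (((‖(y : EuclideanSpace ℝ (Fin n)) - (y' : EuclideanSpace ℝ (Fin n))‖
            / 2 : ℝ) : ℂ) ^ (2 * Complex.I * (w : ℂ) / (h : ℂ))) *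
        ψ y y' * ((ψm y : ℝ) : ℂ) * ((ψp y' : ℝ) : ℂ) * ((ψ₀ w : ℝ) : ℂ) *
        (∫ θ : ℝ, Complex.exp (Complex.I * ((w : ℂ) - (w' : ℂ)) * (θ : ℂ)
            / (h : ℂ)) * ψt θ)‖₊ : ℝ≥0∞) ^ 2
        = (ENNReal.ofReal ‖(((2 * Real.pi * h) ^ (-((n:ℝ) + 1) / 2) : ℝ) : ℂ) *
            (((‖(y : EuclideanSpace ℝ (Fin n)) - (y' : EuclideanSpace ℝ (Fin n))‖
                / 2 : ℝ) : ℂ) ^ (2 * Complex.I * (w : ℂ) / (h : ℂ))) *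
            ψ y y' * ((ψm y : ℝ) : ℂ) * ((ψp y' : ℝ) : ℂ) * ((ψ₀ w : ℝ) : ℂ) *
            (∫ θ : ℝ, Complex.exp (Complex.I * ((w : ℂ) - (w' : ℂ)) * (θ : ℂ)
                / (h : ℂ)) * ψt θ)‖) ^ 2 := by
          rw [ofReal_norm_eq_enorm, enorm_eq_nnnorm]
      _ ≤ (ENNReal.ofReal ((P₀ * C₁) * ‖∫ θ : ℝ, Complex.exp
            (Complex.I * ((w - w' : ℝ) : ℂ) * (θ : ℂ) / (h : ℂ)) * ψt θ‖)) ^ 2 := by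
          exact pow_le_pow_left' (ENNReal.ofReal_le_ofReal hKnorm) 2
      _ = A * G (w - w') := by
          rw [ENNReal.ofReal_mul (by positivity), mul_pow, hGdef, hAdef,
            ofReal_norm_eq_enorm, enorm_eq_nnnorm]
  refine le_trans main ?_
  have mp : ∀ w : ℝ, MeasurePreserving (fun w' : ℝ => w - w') volume volume :=
    fun w => Measure.measurePreserving_sub_left volume w
  have comp : (∫⁻ w : ℝ, ∫⁻ y, ∫⁻ w' : ℝ, ∫⁻ y',
      A * Ic.indicator 1 w * Sm.indicator 1 y * G (w - w') * Sp.indicator 1 y'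
      ∂σ ∂(volume : Measure ℝ) ∂σ ∂(volume : Measure ℝ))
      = (A * σ Sp * E * σ Sm) * volume Ic := by
    calc (∫⁻ w : ℝ, ∫⁻ y, ∫⁻ w' : ℝ, ∫⁻ y',
        A * Ic.indicator 1 w * Sm.indicator 1 y * G (w - w') * Sp.indicator 1 y'
        ∂σ ∂(volume : Measure ℝ) ∂σ ∂(volume : Measure ℝ))
        = ∫⁻ w : ℝ, ∫⁻ y, ∫⁻ w' : ℝ,
            (A * Ic.indicator 1 w * Sm.indicator 1 y * G (w - w')) * σ Sp
            ∂(volume : Measure ℝ) ∂σ ∂(volume : Measure ℝ) := by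
          refine lintegral_congr fun w => lintegral_congr fun y =>
            lintegral_congr fun w' => ?_
          rw [lintegral_const_mul' _ _ (ENNReal.mul_ne_top (ENNReal.mul_ne_top
            (ENNReal.mul_ne_top hAfin (ind_ne_top _ _)) (ind_ne_top _ _)) (hGfin _)),
            lintegral_indicator_one hSpm]
      _ = ∫⁻ w : ℝ, ∫⁻ y, (A * Ic.indicator 1 w * Sm.indicator 1 y * σ Sp) * E
            ∂σ ∂(volume : Measure ℝ) := by
          refine lintegral_congr fun w => lintegral_congr fun y => ?_
          calc ∫⁻ w' : ℝ, (A * Ic.indicator 1 w * Sm.indicator 1 y * G (w - w')) * σ Sp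
              = ∫⁻ w' : ℝ, (A * Ic.indicator 1 w * Sm.indicator 1 y * σ Sp) * G (w - w') :=
                lintegral_congr fun w' => by ring
            _ = (A * Ic.indicator 1 w * Sm.indicator 1 y * σ Sp) * ∫⁻ w' : ℝ, G (w - w') :=
                lintegral_const_mul' _ _ (ENNReal.mul_ne_top (ENNReal.mul_ne_top
                  (ENNReal.mul_ne_top hAfin (ind_ne_top _ _)) (ind_ne_top _ _)) hSpfin)
            _ = (A * Ic.indicator 1 w * Sm.indicator 1 y * σ Sp) * E := by
                congr 1
                exact (mp w).lintegral_comp hGm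
      _ = ∫⁻ w : ℝ, (A * Ic.indicator 1 w * σ Sp * E * σ Sm) ∂(volume : Measure ℝ) := by
          refine lintegral_congr fun w => ?_
          calc ∫⁻ y, (A * Ic.indicator 1 w * Sm.indicator 1 y * σ Sp) * E ∂σ
              = ∫⁻ y, (A * Ic.indicator 1 w * σ Sp * E) * Sm.indicator 1 y ∂σ :=
                lintegral_congr fun y => by ring
            _ = (A * Ic.indicator 1 w * σ Sp * E) * σ Sm := by
                rw [lintegral_const_mul' _ _ (ENNReal.mul_ne_top (ENNReal.mul_ne_top
                  (ENNReal.mul_ne_top hAfin (ind_ne_top _ _)) hSpfin) hEfin),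
                  lintegral_indicator_one hSmm]
            _ = A * Ic.indicator 1 w * σ Sp * E * σ Sm := by ring
      _ = (A * σ Sp * E * σ Sm) * volume Ic := by
          calc ∫⁻ w : ℝ, A * Ic.indicator 1 w * σ Sp * E * σ Sm
              = ∫⁻ w : ℝ, (A * σ Sp * E * σ Sm) * Ic.indicator 1 w :=
                lintegral_congr fun w => by ring
            _ = (A * σ Sp * E * σ Sm) * volume Ic := by
                rw [lintegral_const_mul' _ _ (ENNReal.mul_ne_top (ENNReal.mul_ne_top
                  (ENNReal.mul_ne_top hAfin hSpfin) hEfin) hSmfin),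
                  lintegral_indicator_one measurableSet_Icc]
  rw [comp]
  -- real-number algebra
  have e1 : P₀ ^ 2 = (2*π)^(-((n:ℝ)+1)) * h^(-((n:ℝ)+1)) := by
    have e0 : P₀ ^ (2:ℕ) = (2*π*h)^(-((n:ℝ)+1)) := by
      rw [hP₀def, ← Real.rpow_natCast ((2*π*h) ^ (-((n:ℝ)+1)/2)) 2,
        ← Real.rpow_mul h2πh.le]
      norm_num
    rw [show P₀ ^ 2 = P₀ ^ (2:ℕ) from rfl, e0, Real.mul_rpow (by positivity) hh.le]
  have e2 : h^(-((n:ℝ)+1)) * h^(ρ*((n:ℝ)-1-δ)) * h^(ρ'*((n:ℝ)-1-δ)) * h^ρ * h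
      = h^(-(n:ℝ) + ρ*((n:ℝ)-δ) + ρ'*((n:ℝ)-1-δ)) := by
    rw [← Real.rpow_add hh, ← Real.rpow_add hh, ← Real.rpow_add hh,
      ← Real.rpow_add_one hh.ne']
    congr 1
    ring
  have hreal : (P₀*C₁)^2 * (C₁ * h ^ (ρ * ((n:ℝ) - 1 - δ))) * (2*π*h*B*L) *
      (C₁ * h ^ (ρ' * ((n:ℝ) - 1 - δ))) * (2*(C₁*h^ρ))
      ≤ ((2*π)^(-((n:ℝ)+1)) * C₁^2 * C₁ * (2*π*B*L) * C₁ * (2*C₁)) *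
        h^(-(n:ℝ) + ρ*((n:ℝ)-δ) + ρ'*((n:ℝ)-1-δ)) := by
    apply le_of_eq
    rw [mul_pow, e1, ← e2]
    ring
  calc (A * σ Sp * E * σ Sm) * volume Ic
      ≤ ENNReal.ofReal ((P₀*C₁)^2) * ENNReal.ofReal (C₁ * h ^ (ρ * ((n:ℝ) - 1 - δ))) *
        ENNReal.ofReal (2*π*h*B*L) * ENNReal.ofReal (C₁ * h ^ (ρ' * ((n:ℝ) - 1 - δ))) *
        ENNReal.ofReal (2*(C₁*h^ρ)) := by
        have hA : A = ENNReal.ofReal ((P₀*C₁)^2) := by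
          rw [hAdef, ENNReal.ofReal_pow (by positivity)]
        have hIc : volume Ic = ENNReal.ofReal (2*(C₁*h^ρ)) := by
          rw [hIcdef, Real.volume_Icc]
          congr 1
          ring
        rw [hA, hIc]
        exact mul_le_mul' (mul_le_mul' (mul_le_mul' (mul_le_mul' le_rfl hσp) hEle) hσm) le_rfl
    _ = ENNReal.ofReal ((P₀*C₁)^2 * (C₁ * h ^ (ρ * ((n:ℝ) - 1 - δ))) * (2*π*h*B*L) *
          (C₁ * h ^ (ρ' * ((n:ℝ) - 1 - δ))) * (2*(C₁*h^ρ))) := by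
        rw [← ENNReal.ofReal_mul (by positivity), ← ENNReal.ofReal_mul (by positivity),
          ← ENNReal.ofReal_mul (by positivity), ← ENNReal.ofReal_mul (by positivity)]
    _ ≤ _ := ENNReal.ofReal_le_ofReal hreal
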